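/- For every integer n with 0 ≤ n ≤ l−1, the quotient I^n/I^{n+1} is a free abelian group of rank n+1. -/

import Mathlib

open MvPolynomial

set_option maxHeartbeats 800000
set_option synthInstance.maxHeartbeats 200000

noncomputable section

/-- `A = ℤ[x,y]/(x^l − y^l)`, with `x = X 0`, `y = X 1`. -/
def IA (l : ℕ) : Ideal (MvPolynomial (Fin 2) ℤ) := Ideal.span {X 0 ^ l - X 1 ^ l}

/-- `B = ℤ[x,t]/(t^l − 1)`, with `x = X 0`, `t = X 1`. -/
def IB (l : ℕ) : Ideal (MvPolynomial (Fin 2) ℤ) := Ideal.span {X 1 ^ l - 1}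

abbrev Aq (l : ℕ) := MvPolynomial (Fin 2) ℤ ⧸ IA l
abbrev Bq (l : ℕ) := MvPolynomial (Fin 2) ℤ ⧸ IB l

/-- The class of `x` in `A`. -/
def xA (l : ℕ) : Aq l := Ideal.Quotient.mk (IA l) (X 0)
/-- The class of `y` in `A`. -/
def yA (l : ℕ) : Aq l := Ideal.Quotient.mk (IA l) (X 1)
/-- The class of `x` in `B`. -/
def xB (l : ℕ) : Bq l := Ideal.Quotient.mk (IB l) (X 0)
/-- The class of `t` in `B`. -/
def tB (l : ℕ) : Bq l := Ideal.Quotient.mk (IB l) (X 1)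

lemma tB_pow (l : ℕ) : tB l ^ l = 1 := by
  have h : (X 1 ^ l - 1 : MvPolynomial (Fin 2) ℤ) ∈ IB l := Ideal.subset_span rfl
  have h2 : Ideal.Quotient.mk (IB l) (X 1 ^ l - 1) = 0 :=
    Ideal.Quotient.eq_zero_iff_mem.mpr h
  have h3 : tB l ^ l - 1 = 0 := by
    rw [tB, ← map_pow, ← map_one (Ideal.Quotient.mk (IB l)), ← map_sub]
    simpa using h2
  exact sub_eq_zero.mp h3

/-- The diagonal ring homomorphism `Δ : A → B`, determined by `x ↦ x`, `y ↦ t·x`. -/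
def Δmap (l : ℕ) : Aq l →+* Bq l :=
  Ideal.Quotient.lift (IA l) ((aeval ![xB l, tB l * xB l]).toRingHom)
    (by
      intro p hp
      obtain ⟨c, rfl⟩ := Ideal.mem_span_singleton'.mp hp
      have key : (aeval ![xB l, tB l * xB l]) (X 0 ^ l - X 1 ^ l : MvPolynomial (Fin 2) ℤ) = 0 := by
        simp [mul_pow, tB_pow l]
      simp only [AlgHom.toRingHom_eq_coe, RingHom.coe_coe, map_mul, key, mul_zero])

lemma Δmap_xA (l : ℕ) : Δmap l (xA l) = xB l := by
  simp [Δmap, xA]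

lemma Δmap_yA (l : ℕ) : Δmap l (yA l) = tB l * xB l := by
  simp [Δmap, yA]

/-- The ideal `I = (x, y) ⊆ A`. -/
def Iid (l : ℕ) : Ideal (Aq l) := Ideal.span {xA l, yA l}

/-! ### Auxiliary machinery -/

/-- The ideal `(X 0, X 1)` in `ℤ[x,y]`. -/
def Jid : Ideal (MvPolynomial (Fin 2) ℤ) := Ideal.span {(X 0 : MvPolynomial (Fin 2) ℤ), X 1}

/-- The exponent `(a, b)` as a finitely supported function on `Fin 2`. -/
def e2 (a b : ℕ) : Fin 2 →₀ ℕ := Finsupp.single 0 a + Finsupp.single 1 b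

lemma e2_apply0 (a b : ℕ) : e2 a b 0 = a := by
  simp [e2, Finsupp.single_apply]

lemma e2_apply1 (a b : ℕ) : e2 a b 1 = b := by
  simp [e2, Finsupp.single_apply]

lemma eq_e2 (d : Fin 2 →₀ ℕ) : d = e2 (d 0) (d 1) := by
  ext i
  fin_cases i
  · show d 0 = e2 (d 0) (d 1) 0
    rw [e2_apply0]
  · show d 1 = e2 (d 0) (d 1) 1
    rw [e2_apply1]

lemma coeff_IA (l a b : ℕ) (ha : a < l) (hb : b < l) {p : MvPolynomial (Fin 2) ℤ}
    (hp : p ∈ IA l) : MvPolynomial.coeff (e2 a b) p = 0 := by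
  obtain ⟨c, rfl⟩ := Ideal.mem_span_singleton'.mp hp
  rw [mul_sub, MvPolynomial.coeff_sub, X_pow_eq_monomial, X_pow_eq_monomial,
    MvPolynomial.coeff_mul_monomial', MvPolynomial.coeff_mul_monomial']
  rw [if_neg, if_neg, sub_zero]
  · intro h
    have := Finsupp.single_le_iff.mp h
    rw [e2_apply1] at this
    omega
  · intro h
    have := Finsupp.single_le_iff.mp h
    rw [e2_apply0] at this
    omega

/-- The coefficient functional at `(a,b)` descends to `A` provided `a < l` and `b < l`. -/
def Fc (l a b : ℕ) (ha : a < l) (hb : b < l) : Aq l →ₗ[ℤ] ℤ :=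
  (Submodule.liftQ ((IA l).restrictScalars ℤ) (MvPolynomial.lcoeff ℤ (e2 a b))
      (by
        intro q hq
        rw [LinearMap.mem_ker]
        exact coeff_IA l a b ha hb hq)).comp
    (Submodule.Quotient.restrictScalarsEquiv ℤ (IA l)).symm.toLinearMap

lemma Fc_mk (l a b : ℕ) (ha : a < l) (hb : b < l) (p : MvPolynomial (Fin 2) ℤ) :
    Fc l a b ha hb (Ideal.Quotient.mk (IA l) p) = MvPolynomial.coeff (e2 a b) p := rfl

lemma X0_mem_Jid : (X 0 : MvPolynomial (Fin 2) ℤ) ∈ Jid := Ideal.subset_span (by simp)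
lemma X1_mem_Jid : (X 1 : MvPolynomial (Fin 2) ℤ) ∈ Jid := Ideal.subset_span (by simp)

lemma monomial_mem_Jpow (d : Fin 2 →₀ ℕ) (c : ℤ) (m : ℕ) (h : m ≤ d 0 + d 1) :
    (MvPolynomial.monomial d c : MvPolynomial (Fin 2) ℤ) ∈ Jid ^ m := by
  have h1 : (MvPolynomial.monomial d c : MvPolynomial (Fin 2) ℤ)
      = MvPolynomial.C c * ((X 0 : MvPolynomial (Fin 2) ℤ) ^ d 0 * X 1 ^ d 1) := by
    rw [MvPolynomial.monomial_eq, Finsupp.prod_fintype _ _ (fun i => pow_zero _),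
      Fin.prod_univ_two]
  rw [h1]
  have h2 : ((X 0 : MvPolynomial (Fin 2) ℤ) ^ d 0 * X 1 ^ d 1) ∈ Jid ^ (d 0 + d 1) := by
    rw [pow_add]
    exact Ideal.mul_mem_mul (Ideal.pow_mem_pow X0_mem_Jid _) (Ideal.pow_mem_pow X1_mem_Jid _)
  exact Ideal.mul_mem_left _ _ (Ideal.pow_le_pow_right h h2)

lemma mem_Jpow {p : MvPolynomial (Fin 2) ℤ} {m : ℕ}
    (h : ∀ d ∈ p.support, m ≤ d 0 + d 1) : p ∈ Jid ^ m := by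
  rw [← MvPolynomial.support_sum_monomial_coeff p]
  exact Submodule.sum_mem _ fun d hd => monomial_mem_Jpow d _ m (h d hd)

lemma coeff_zero_of_mem_Jpow : ∀ (m : ℕ) (p : MvPolynomial (Fin 2) ℤ), p ∈ Jid ^ m →
    ∀ d : Fin 2 →₀ ℕ, d 0 + d 1 < m → MvPolynomial.coeff d p = 0 := by
  intro m
  induction m with
  | zero => intro p hp d hd; omega
  | succ m ih =>
    intro p hp
    rw [pow_succ] at hp
    refine Submodule.mul_induction_on hp ?_ ?_
    · intro a ha b hb d hd
      rw [MvPolynomial.coeff_mul]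
      apply Finset.sum_eq_zero
      intro uv huv
      rw [Finset.HasAntidiagonal.mem_antidiagonal] at huv
      have hsum : uv.1 0 + uv.2 0 + (uv.1 1 + uv.2 1) = d 0 + d 1 := by
        rw [← huv]; simp [Finsupp.add_apply]
      by_cases hu : uv.1 0 + uv.1 1 < m
      · rw [ih _ ha _ hu, zero_mul]
      · have hv0 : uv.2 0 = 0 ∧ uv.2 1 = 0 := by omega
        have huv2 : uv.2 = 0 := by
          ext i
          fin_cases i
          · show uv.2 0 = (0 : Fin 2 →₀ ℕ) 0
            simp [hv0.1]
          · show uv.2 1 = (0 : Fin 2 →₀ ℕ) 1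
            simp [hv0.2]
        rw [huv2]
        have hb0 : MvPolynomial.coeff (0 : Fin 2 →₀ ℕ) b = 0 := by
          obtain ⟨u, v, rfl⟩ := Ideal.mem_span_pair.mp hb
          rw [show (MvPolynomial.coeff (0 : Fin 2 →₀ ℕ) :
              MvPolynomial (Fin 2) ℤ → ℤ) = MvPolynomial.constantCoeff
            from MvPolynomial.constantCoeff_eq.symm]
          simp [smul_eq_mul]
        rw [hb0, mul_zero]
    · intro x y hx hy d hd
      rw [MvPolynomial.coeff_add, hx d hd, hy d hd, add_zero]

lemma Iid_eq (l : ℕ) : Iid l = Ideal.map (Ideal.Quotient.mk (IA l)) Jid := by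
  rw [Jid, Ideal.map_span, Set.image_insert_eq, Set.image_singleton]
  rfl

lemma mem_Iid_pow (l m : ℕ) (v : Aq l) :
    v ∈ Iid l ^ m ↔ ∃ p, p ∈ Jid ^ m ∧ Ideal.Quotient.mk (IA l) p = v := by
  rw [Iid_eq, ← Ideal.map_pow]
  exact Ideal.mem_map_iff_of_surjective _ Ideal.Quotient.mk_surjective

/-- The coordinate map `I^n → ℤ^{n+1}` reading off the coefficients in total degree `n`. -/
def Φmap (l n : ℕ) (hn' : n < l) : ↥(Iid l ^ n) →ₗ[ℤ] (Fin (n + 1) → ℤ) :=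
  AddMonoidHom.toIntLinearMap
  { toFun := fun v a =>
      Fc l a (n - a) (lt_of_lt_of_le a.isLt hn') (lt_of_le_of_lt (Nat.sub_le n a) hn') v.1
    map_zero' := by funext a; simp
    map_add' := by intro v w; funext a; simp }

lemma Φmap_eq (l n : ℕ) (hn' : n < l) (v : ↥(Iid l ^ n)) (p : MvPolynomial (Fin 2) ℤ)
    (hp : Ideal.Quotient.mk (IA l) p = v.1) (a : Fin (n + 1)) :
    Φmap l n hn' v a = MvPolynomial.coeff (e2 a (n - a)) p := by
  obtain ⟨v, hv⟩ := v
  cases hp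
  rfl

/-- For every `0 ≤ n ≤ l−1`, the quotient `I^n/I^{n+1}` is a free abelian group of rank
`n+1`. -/
theorem stmt_16 (l : ℕ) (hl : 1 ≤ l) (n : ℕ) (hn : n ≤ l - 1) :
    Nonempty ((↥(Iid l ^ n) ⧸ Submodule.comap (Iid l ^ n).subtype (Iid l ^ (n + 1))) ≃+
      (Fin (n + 1) → ℤ)) := by
  have hn' : n < l := by omega
  -- Surjectivity of Φmap
  have hsurj : Function.Surjective (Φmap l n hn') := by
    intro w
    set p : MvPolynomial (Fin 2) ℤ :=
      ∑ a : Fin (n + 1), MvPolynomial.monomial (e2 a (n - a)) (w a) with hpdef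
    have hpJ : p ∈ Jid ^ n := by
      refine Submodule.sum_mem _ fun a _ => monomial_mem_Jpow _ _ _ ?_
      rw [e2_apply0, e2_apply1]
      have := a.isLt
      omega
    have hv : Ideal.Quotient.mk (IA l) p ∈ Iid l ^ n :=
      (mem_Iid_pow l n _).mpr ⟨p, hpJ, rfl⟩
    refine ⟨⟨_, hv⟩, ?_⟩
    funext a
    rw [Φmap_eq l n hn' ⟨_, hv⟩ p rfl a, hpdef, MvPolynomial.coeff_sum]
    have key : ∀ a' : Fin (n + 1),
        MvPolynomial.coeff (e2 a (n - a)) (MvPolynomial.monomial (e2 a' (n - a')) (w a'))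
          = if a' = a then w a' else 0 := by
      intro a'
      rw [MvPolynomial.coeff_monomial]
      by_cases h : a' = a
      · subst h; rw [if_pos rfl, if_pos rfl]
      · rw [if_neg, if_neg h]
        intro hc
        apply h
        have h0 := DFunLike.congr_fun hc 0
        rw [e2_apply0, e2_apply0] at h0
        exact Fin.ext h0
    rw [Finset.sum_congr rfl fun a' _ => key a', Finset.sum_ite_eq' Finset.univ a w,
      if_pos (Finset.mem_univ a)]
  -- Kernel of Φmap
  have hker : Submodule.restrictScalars ℤ
      (Submodule.comap (Iid l ^ n).subtype (Iid l ^ (n + 1))) = LinearMap.ker (Φmap l n hn') := by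
    ext v
    simp only [Submodule.restrictScalars_mem, Submodule.mem_comap, Submodule.subtype_apply,
      LinearMap.mem_ker]
    obtain ⟨p, hpJ, hpv⟩ := (mem_Iid_pow l n v.1).mp v.2
    constructor
    · intro hv
      obtain ⟨q, hqJ, hqv⟩ := (mem_Iid_pow l (n + 1) v.1).mp hv
      funext a
      rw [Φmap_eq l n hn' v q hqv a, Pi.zero_apply]
      refine coeff_zero_of_mem_Jpow (n + 1) q hqJ _ ?_
      rw [e2_apply0, e2_apply1]
      have := a.isLt
      omega
    · intro hv
      refine (mem_Iid_pow l (n + 1) v.1).mpr ⟨p, ?_, hpv⟩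
      refine mem_Jpow fun d hd => ?_
      by_contra hlt
      push_neg at hlt
      have hge : n ≤ d 0 + d 1 := by
        by_contra h2
        push_neg at h2
        exact (MvPolynomial.mem_support_iff.mp hd)
          (coeff_zero_of_mem_Jpow n p hpJ d h2)
      have ha' : d 0 < n + 1 := by omega
      have h1 := congrFun hv ⟨d 0, ha'⟩
      rw [Φmap_eq l n hn' v p hpv ⟨d 0, ha'⟩, Pi.zero_apply] at h1
      have he : e2 (↑(⟨d 0, ha'⟩ : Fin (n + 1))) (n - ↑(⟨d 0, ha'⟩ : Fin (n + 1))) = d := by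
        show e2 (d 0) (n - d 0) = d
        rw [show n - d 0 = d 1 by omega]
        exact (eq_e2 d).symm
      rw [he] at h1
      exact MvPolynomial.mem_support_iff.mp hd h1
  refine ⟨?_⟩
  have E1 := (Submodule.Quotient.restrictScalarsEquiv ℤ
    (Submodule.comap (Iid l ^ n).subtype (Iid l ^ (n + 1)))).symm
  have E2 := (Submodule.quotEquivOfEq _ _ hker).trans
    ((Φmap l n hn').quotKerEquivOfSurjective hsurj)
  exact E1.toAddEquiv.trans E2.toAddEquiv
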